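/- Fix real constants m, b, c, κ, e and ε ∈ {1, −1}. Define, for τ ∉ {0, c, 2c}, the rational functions p(τ) = [−mτ³ + (2(2m−1)c+b)τ² − (2(2m−1)c²+3bc)τ + 2bc²] / [τ²(τ−c)(τ−2c)], q(τ) = [−εκτ³/2 + eτ(τ−c)] / [τ²(τ−c)(τ−2c)], A(τ) = τ²(τ−c)², B(τ) = (τ−c)[mτ² − (τ−c)(2(m−1)τ − b)], and D(τ) = −εκτ²/2. Then the identity D − A·(q′ − p·q) − B·q = 0 holds at every real τ with τ ∉ {0, c, 2c}, where q′ denotes the derivative of q. -/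

import Mathlib

/-- The identity `D − A·(q′ − p·q) − B·q = 0` away from `{0, c, 2c}`. -/
theorem stmt_7 (m b c κ e ε : ℝ) (hε : ε = 1 ∨ ε = -1)
    (p q A B D : ℝ → ℝ)
    (hpdef : ∀ τ, p τ =
      (-m*τ^3 + (2*(2*m-1)*c + b)*τ^2 - (2*(2*m-1)*c^2 + 3*b*c)*τ + 2*b*c^2)
        / (τ^2*(τ-c)*(τ-2*c)))
    (hqdef : ∀ τ, q τ = (-ε*κ*τ^3/2 + e*τ*(τ-c)) / (τ^2*(τ-c)*(τ-2*c)))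
    (hAdef : ∀ τ, A τ = τ^2*(τ-c)^2)
    (hBdef : ∀ τ, B τ = (τ-c) * (m*τ^2 - (τ-c)*(2*(m-1)*τ - b)))
    (hDdef : ∀ τ, D τ = -ε*κ*τ^2/2) :
    ∀ τ : ℝ, τ ≠ 0 → τ ≠ c → τ ≠ 2*c →
      D τ - A τ * (deriv q τ - p τ * q τ) - B τ * q τ = 0 := by
  intro τ h0 hc h2c
  have h1 : τ - c ≠ 0 := sub_ne_zero.mpr hc
  have h2 : τ - 2*c ≠ 0 := sub_ne_zero.mpr h2c
  have hden : τ^2*(τ-c)*(τ-2*c) ≠ 0 := by positivity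
  -- compute derivative of q at τ
  have hn : HasDerivAt (fun t : ℝ => -ε*κ*t^3/2 + e*t*(t-c))
      (-ε*κ*(3*τ^2)/2 + (e*(τ-c) + e*τ)) τ := by
    have h1' : HasDerivAt (fun t : ℝ => -ε*κ*t^3/2) (-ε*κ*(3*τ^2)/2) τ := by
      have := ((hasDerivAt_pow 3 τ).const_mul (-ε*κ)).div_const 2
      simpa using this
    have h2' : HasDerivAt (fun t : ℝ => e*t*(t-c)) (e*(τ-c) + e*τ) τ := by
      have ha : HasDerivAt (fun t : ℝ => e*t) e τ := by
        simpa using (hasDerivAt_id τ).const_mul e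
      have hb : HasDerivAt (fun t : ℝ => t - c) 1 τ := by
        simpa using (hasDerivAt_id τ).sub_const c
      have := ha.mul hb
      exact this.congr_deriv (by ring)
    exact h1'.add h2'
  have hd : HasDerivAt (fun t : ℝ => t^2*(t-c)*(t-2*c))
      ((2*τ*(τ-c) + τ^2)*(τ-2*c) + τ^2*(τ-c)) τ := by
    have ha : HasDerivAt (fun t : ℝ => t^2) (2*τ) τ := by
      simpa using hasDerivAt_pow 2 τ
    have hb : HasDerivAt (fun t : ℝ => t - c) 1 τ := (hasDerivAt_id τ).sub_const c
    have hb2 : HasDerivAt (fun t : ℝ => t - 2*c) 1 τ := (hasDerivAt_id τ).sub_const (2*c)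
    have := ((ha.mul hb).mul hb2)
    exact this.congr_deriv (by simp only [Pi.mul_apply]; ring)
  have hq : HasDerivAt q
      (((-ε*κ*(3*τ^2)/2 + (e*(τ-c) + e*τ)) * (τ^2*(τ-c)*(τ-2*c))
        - (-ε*κ*τ^3/2 + e*τ*(τ-c)) * ((2*τ*(τ-c) + τ^2)*(τ-2*c) + τ^2*(τ-c)))
        / (τ^2*(τ-c)*(τ-2*c))^2) τ := by
    have := hn.div hd hden
    have hqfun : q = fun t => (-ε*κ*t^3/2 + e*t*(t-c)) / (t^2*(t-c)*(t-2*c)) :=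
      funext hqdef
    rw [hqfun]
    exact this
  rw [hq.deriv, hqdef, hpdef, hAdef, hBdef, hDdef]
  field_simp
  ring
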